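/- Let h : [0,1] → ℝ be non-decreasing with h(1) − h(0) < ∞ and ∫_0^1 y log(1/y) dh(y) > 0. Let P be a probability distribution on a finite vocabulary with singularity Δ = 1 − max_w P_w. Then for sufficiently small Δ, E_{Y∼μ_{1,P}} h(Y) − E_{Y∼Uniform(0,1)} h(Y) = Θ(Δ), i.e., there exist positive constants c₁, c₂ independent of Δ such that c₁Δ ≤ E_{1,P} h − E_0 h ≤ c₂Δ. -/

import Mathlib

open MeasureTheory Real Set Finset

namespace MonotoneScoreGapAux

/-- Boundedness of a Stieltjes function on `[0,1]`. -/
lemma h_abs_bound (h : StieltjesFunction ℝ) {r : ℝ} (h0 : 0 ≤ r) (h1 : r ≤ 1) :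
    |h r| ≤ max |h 0| |h 1| := by
  rw [abs_le]
  constructor
  · have : -|h 0| ≤ h 0 := neg_abs_le _
    have h2 : h 0 ≤ h r := h.mono h0
    have : -(max |h 0| |h 1|) ≤ -|h 0| := neg_le_neg (le_max_left _ _)
    linarith
  · have h2 : h r ≤ h 1 := h.mono h1
    have : h 1 ≤ |h 1| := le_abs_self _
    have : |h 1| ≤ max |h 0| |h 1| := le_max_right _ _
    linarith

lemma integrableOn_of_bound (g : ℝ → ℝ) (hg : Measurable g) (C : ℝ)
    (hb : ∀ r ∈ Set.Ioo (0:ℝ) 1, |g r| ≤ C) :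
    IntegrableOn g (Set.Ioo (0:ℝ) 1) := by
  haveI : IsFiniteMeasure (volume.restrict (Set.Ioo (0:ℝ) 1)) := by
    constructor
    rw [Measure.restrict_apply_univ, Real.volume_Ioo]
    exact ENNReal.ofReal_lt_top
  refine ⟨hg.aestronglyMeasurable, HasFiniteIntegral.of_bounded (C := C) ?_⟩
  refine (ae_restrict_iff' measurableSet_Ioo).2 (ae_of_all _ fun r hr => ?_)
  simpa [Real.norm_eq_abs] using hb r hr

lemma measurable_h_rpow (h : StieltjesFunction ℝ) {q : ℝ} (hq : 0 ≤ q) :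
    Measurable fun s : ℝ => h (s ^ q) :=
  h.mono.measurable.comp (Real.continuous_rpow_const hq).measurable

lemma integrableOn_h_rpow (h : StieltjesFunction ℝ) {q : ℝ} (hq : 0 ≤ q) :
    IntegrableOn (fun s : ℝ => h (s ^ q)) (Set.Ioo (0:ℝ) 1) := by
  refine integrableOn_of_bound _ (measurable_h_rpow h hq) (max |h 0| |h 1|)
    (fun r hr => ?_)
  exact h_abs_bound h (Real.rpow_nonneg hr.1.le q)
    (Real.rpow_le_one hr.1.le hr.2.le hq)

lemma integrableOn_h (h : StieltjesFunction ℝ) :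
    IntegrableOn (fun s : ℝ => h s) (Set.Ioo (0:ℝ) 1) := by
  refine integrableOn_of_bound _ h.mono.measurable (max |h 0| |h 1|) (fun r hr => ?_)
  exact h_abs_bound h hr.1.le hr.2.le

lemma integrableOn_h_mul_rpow (h : StieltjesFunction ℝ) {a : ℝ} (ha : 0 ≤ a) :
    IntegrableOn (fun r : ℝ => h r * r ^ a) (Set.Ioo (0:ℝ) 1) := by
  refine integrableOn_of_bound _
    (h.mono.measurable.mul (Real.continuous_rpow_const ha).measurable)
    (max |h 0| |h 1|) (fun r hr => ?_)
  rw [abs_mul]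
  have h1 : |r ^ a| ≤ 1 := by
    rw [abs_of_nonneg (Real.rpow_nonneg hr.1.le a)]
    exact Real.rpow_le_one hr.1.le hr.2.le ha
  calc |h r| * |r ^ a| ≤ |h r| * 1 :=
        mul_le_mul_of_nonneg_left h1 (abs_nonneg _)
    _ = |h r| := mul_one _
    _ ≤ max |h 0| |h 1| := h_abs_bound h hr.1.le hr.2.le

/-- Change of variables `r = s ^ p`. -/
lemma subst (h : StieltjesFunction ℝ) {p : ℝ} (hp0 : 0 < p) (hp1 : p ≤ 1) :
    ∫ r in Set.Ioo (0:ℝ) 1, h r * r ^ (1 / p - 1)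
      = p * ∫ s in Set.Ioo (0:ℝ) 1, h (s ^ p) := by
  have himg : (fun x : ℝ => x ^ p) '' Set.Ioo 0 1 = Set.Ioo (0:ℝ) 1 := by
    ext y
    constructor
    · rintro ⟨x, hx, rfl⟩
      exact ⟨Real.rpow_pos_of_pos hx.1 p, Real.rpow_lt_one hx.1.le hx.2 hp0⟩
    · intro hy
      refine ⟨y ^ (1 / p), ⟨Real.rpow_pos_of_pos hy.1 _,
        Real.rpow_lt_one hy.1.le hy.2 (by positivity)⟩, ?_⟩
      show (y ^ (1 / p)) ^ p = y
      rw [← Real.rpow_mul hy.1.le, one_div, inv_mul_cancel₀ hp0.ne', Real.rpow_one]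
  have hderiv : ∀ x ∈ Set.Ioo (0:ℝ) 1,
      HasDerivWithinAt (fun x : ℝ => x ^ p) (p * x ^ (p - 1)) (Set.Ioo 0 1) x :=
    fun x hx => (Real.hasDerivAt_rpow_const (Or.inl hx.1.ne')).hasDerivWithinAt
  have hinj : Set.InjOn (fun x : ℝ => x ^ p) (Set.Ioo 0 1) := by
    intro x hx y hy hxy
    have := Real.rpow_le_rpow_iff hx.1.le hy.1.le hp0
    have := Real.rpow_le_rpow_iff hy.1.le hx.1.le hp0
    simp only at hxy
    nlinarith [ (Real.rpow_le_rpow_iff hx.1.le hy.1.le hp0).1 hxy.le,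
      (Real.rpow_le_rpow_iff hy.1.le hx.1.le hp0).1 hxy.ge ]
  calc ∫ r in Set.Ioo (0:ℝ) 1, h r * r ^ (1 / p - 1)
      = ∫ r in (fun x : ℝ => x ^ p) '' Set.Ioo 0 1, h r * r ^ (1 / p - 1) := by
        rw [himg]
    _ = ∫ x in Set.Ioo (0:ℝ) 1,
          |p * x ^ (p - 1)| • (h (x ^ p) * (x ^ p) ^ (1 / p - 1)) :=
        integral_image_eq_integral_abs_deriv_smul measurableSet_Ioo hderiv hinj _
    _ = ∫ x in Set.Ioo (0:ℝ) 1, p * h (x ^ p) := by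
        refine setIntegral_congr_fun measurableSet_Ioo (fun x hx => ?_)
        have hx0 : (0:ℝ) < x := hx.1
        have h1 : ((x:ℝ) ^ p) ^ (1 / p - 1) = x ^ (1 - p) := by
          rw [← Real.rpow_mul hx0.le]
          congr 1
          field_simp
        have h2 : x ^ (p - 1) * x ^ (1 - p) = 1 := by
          rw [← Real.rpow_add hx0]
          norm_num
        have h3 : (0:ℝ) < p * x ^ (p - 1) :=
          mul_pos hp0 (Real.rpow_pos_of_pos hx0 _)
        rw [smul_eq_mul, abs_of_pos h3, h1]
        calc p * x ^ (p - 1) * (h (x ^ p) * x ^ (1 - p))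
            = p * h (x ^ p) * (x ^ (p - 1) * x ^ (1 - p)) := by ring
          _ = p * h (x ^ p) := by rw [h2, mul_one]
    _ = p * ∫ s in Set.Ioo (0:ℝ) 1, h (s ^ p) := integral_const_mul _ _

/-- General bounded-measurable integrability on `(0,1)` for a finite measure there. -/
lemma integrableOn_of_bound' (μ : Measure ℝ) (hμ : μ (Set.Ioo (0:ℝ) 1) ≠ ⊤)
    (g : ℝ → ℝ) (hg : Measurable g) (C : ℝ)
    (hb : ∀ r ∈ Set.Ioo (0:ℝ) 1, |g r| ≤ C) :
    IntegrableOn g (Set.Ioo (0:ℝ) 1) μ := by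
  haveI : IsFiniteMeasure (μ.restrict (Set.Ioo (0:ℝ) 1)) := by
    constructor
    rw [Measure.restrict_apply_univ]
    exact lt_top_iff_ne_top.2 hμ
  refine ⟨hg.aestronglyMeasurable, HasFiniteIntegral.of_bounded (C := C) ?_⟩
  refine (ae_restrict_iff' measurableSet_Ioo).2 (ae_of_all _ fun r hr => ?_)
  simpa [Real.norm_eq_abs] using hb r hr

/-- Fubini: `∫₀¹ (h(s^p) − h(s)) ds = ∫ (y − y^{1/p}) dμ_h(y)` over `(0,1)`. -/
lemma phi_eq (h : StieltjesFunction ℝ) {p : ℝ} (hp0 : 0 < p) (hp1 : p ≤ 1) :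
    ∫ s in Set.Ioo (0:ℝ) 1, (h (s ^ p) - h s)
      = ∫ y in Set.Ioo (0:ℝ) 1, (y - y ^ (1 / p)) ∂h.measure := by
  have hfin : h.measure (Set.Ioo (0:ℝ) 1) < ⊤ := by
    refine lt_of_le_of_lt (measure_mono Set.Ioo_subset_Ioc_self) ?_
    rw [h.measure_Ioc]
    exact ENNReal.ofReal_lt_top
  set ν := h.measure.restrict (Set.Ioo (0:ℝ) 1) with hνdef
  haveI : IsFiniteMeasure ν := by
    constructor
    rw [hνdef, Measure.restrict_apply_univ]
    exact hfin
  set S : Set (ℝ × ℝ) := {q : ℝ × ℝ | q.1 < q.2 ∧ q.2 ≤ q.1 ^ p} with hSdef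
  have hS : MeasurableSet S :=
    (measurableSet_lt measurable_fst measurable_snd).inter
      (measurableSet_le measurable_snd
        (((Real.continuous_rpow_const hp0.le).measurable).comp measurable_fst))
  have h1 : ∫⁻ s in Set.Ioo (0:ℝ) 1, ENNReal.ofReal (h (s ^ p) - h s)
      = ((volume.restrict (Set.Ioo (0:ℝ) 1)).prod ν) S := by
    rw [Measure.prod_apply hS]
    refine (setLIntegral_congr_fun measurableSet_Ioo (fun s hs => ?_)).symm
    have hpre : Prod.mk s ⁻¹' S = Set.Ioc s (s ^ p) := rfl
    have hsub : Set.Ioc s (s ^ p) ⊆ Set.Ioo (0:ℝ) 1 := fun y hy =>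
      ⟨lt_trans hs.1 hy.1, lt_of_le_of_lt hy.2 (Real.rpow_lt_one hs.1.le hs.2 hp0)⟩
    rw [hνdef, hpre, Measure.restrict_apply measurableSet_Ioc,
      Set.inter_eq_left.2 hsub, h.measure_Ioc]
  have h2 : ((volume.restrict (Set.Ioo (0:ℝ) 1)).prod ν) S
      = ∫⁻ y in Set.Ioo (0:ℝ) 1, ENNReal.ofReal (y - y ^ (1 / p)) ∂h.measure := by
    rw [Measure.prod_apply_symm hS, hνdef]
    refine setLIntegral_congr_fun measurableSet_Ioo (fun y hy => ?_)
    have hkey : ((fun x => (x, y)) ⁻¹' S) ∩ Set.Ioo (0:ℝ) 1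
        = Set.Ico (y ^ (1 / p)) y := by
      ext x
      simp only [hSdef, Set.mem_inter_iff, Set.mem_preimage, Set.mem_setOf_eq,
        Set.mem_Ioo, Set.mem_Ico]
      constructor
      · rintro ⟨⟨hxy, hyx⟩, hx0, _⟩
        refine ⟨?_, hxy⟩
        have hle : y ^ (1 / p) ≤ (x ^ p) ^ (1 / p) :=
          Real.rpow_le_rpow hy.1.le hyx (by positivity)
        rwa [← Real.rpow_mul hx0.le, mul_one_div, div_self hp0.ne',
          Real.rpow_one] at hle
      · rintro ⟨hx1, hx2⟩
        have hy1p : 0 < y ^ (1 / p) := Real.rpow_pos_of_pos hy.1 _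
        have hx0 : 0 < x := lt_of_lt_of_le hy1p hx1
        refine ⟨⟨hx2, ?_⟩, hx0, lt_trans hx2 hy.2⟩
        have hle : (y ^ (1 / p)) ^ p ≤ x ^ p :=
          Real.rpow_le_rpow hy1p.le hx1 hp0.le
        rwa [← Real.rpow_mul hy.1.le, one_div, inv_mul_cancel₀ hp0.ne',
          Real.rpow_one] at hle
    rw [Measure.restrict_apply' measurableSet_Ioo, hkey, Real.volume_Ico]
  have hmono1 : ∀ s ∈ Set.Ioo (0:ℝ) 1, h s ≤ h (s ^ p) := by
    intro s hs
    refine h.mono ?_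
    have := Real.rpow_le_rpow_of_exponent_ge hs.1 hs.2.le hp1
    rwa [Real.rpow_one] at this
  have hmono2 : ∀ y ∈ Set.Ioo (0:ℝ) 1, y ^ (1 / p) ≤ y := by
    intro y hy
    have := Real.rpow_le_rpow_of_exponent_ge hy.1 hy.2.le (one_le_one_div hp0 hp1)
    rwa [Real.rpow_one] at this
  have e1 : ∫ s in Set.Ioo (0:ℝ) 1, (h (s ^ p) - h s)
      = (∫⁻ s in Set.Ioo (0:ℝ) 1, ENNReal.ofReal (h (s ^ p) - h s)).toReal := by
    refine integral_eq_lintegral_of_nonneg_ae ?_ ?_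
    · exact (ae_restrict_iff' measurableSet_Ioo).2
        (ae_of_all _ fun s hs => sub_nonneg.2 (hmono1 s hs))
    · exact ((measurable_h_rpow h hp0.le).sub h.mono.measurable).aestronglyMeasurable
  have e2 : ∫ y in Set.Ioo (0:ℝ) 1, (y - y ^ (1 / p)) ∂h.measure
      = (∫⁻ y in Set.Ioo (0:ℝ) 1, ENNReal.ofReal (y - y ^ (1 / p)) ∂h.measure).toReal := by
    refine integral_eq_lintegral_of_nonneg_ae ?_ ?_
    · exact (ae_restrict_iff' measurableSet_Ioo).2
        (ae_of_all _ fun y hy => sub_nonneg.2 (hmono2 y hy))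
    · exact (measurable_id.sub
        (Real.continuous_rpow_const (by positivity)).measurable).aestronglyMeasurable
  rw [e1, e2, h1, h2]

/-- Pointwise upper bound `y − y^{1/(1−Δ)} ≤ 2Δ · y log(1/y)`. -/
lemma pt_upper {y Δ : ℝ} (hy : y ∈ Set.Ioo (0:ℝ) 1) (hΔ0 : 0 ≤ Δ) (hΔ : Δ ≤ 1/2) :
    y - y ^ (1 / (1 - Δ)) ≤ 2 * Δ * (y * Real.log (1 / y)) := by
  have hp : (0:ℝ) < 1 - Δ := by linarith
  have hy0 := hy.1
  have hy1 := hy.2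
  set ε : ℝ := 1 / (1 - Δ) - 1 with hεdef
  have hεeq : ε = Δ / (1 - Δ) := by rw [hεdef]; field_simp; ring
  have hε0 : 0 ≤ ε := by rw [hεeq]; positivity
  have hε2 : ε ≤ 2 * Δ := by rw [hεeq, div_le_iff₀ hp]; nlinarith
  have hsplit : y ^ (1 / (1 - Δ)) = y * y ^ ε := by
    have he : 1 / (1 - Δ) = 1 + ε := by rw [hεdef]; ring
    rw [he, Real.rpow_add hy0, Real.rpow_one]
  have hlog : Real.log (1 / y) = -Real.log y := by rw [one_div, Real.log_inv]
  have hlognn : 0 ≤ Real.log (1 / y) := by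
    rw [hlog]
    have := Real.log_nonpos hy0.le hy1.le
    linarith
  have hexp : 1 + ε * Real.log y ≤ y ^ ε := by
    calc 1 + ε * Real.log y = Real.log y * ε + 1 := by ring
      _ ≤ Real.exp (Real.log y * ε) := Real.add_one_le_exp _
      _ = y ^ ε := (Real.rpow_def_of_pos hy0 _).symm
  have h2 : 1 - y ^ ε ≤ ε * Real.log (1 / y) := by rw [hlog]; linarith
  calc y - y ^ (1 / (1 - Δ)) = y * (1 - y ^ ε) := by rw [hsplit]; ring
    _ ≤ y * (ε * Real.log (1 / y)) := mul_le_mul_of_nonneg_left h2 hy0.le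
    _ ≤ 2 * Δ * (y * Real.log (1 / y)) := by
        nlinarith [mul_nonneg hy0.le hlognn,
          mul_le_mul_of_nonneg_right hε2 (mul_nonneg hy0.le hlognn)]

/-- Pointwise lower bound on `[a,b] ⊆ (0,1)`. -/
lemma pt_lower {a b y Δ : ℝ} (ha : 0 < a) (hb1 : b < 1) (hab : a ≤ b)
    (hy : y ∈ Set.Icc a b) (hΔ0 : 0 ≤ Δ) (hΔ : Δ ≤ 1/2) :
    Δ * (a * b * Real.log (1 / b)) ≤ y - y ^ (1 / (1 - Δ)) := by
  have hb0 : 0 < b := lt_of_lt_of_le ha hab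
  have hp : (0:ℝ) < 1 - Δ := by linarith
  have hy0 : 0 < y := lt_of_lt_of_le ha hy.1
  set ε : ℝ := 1 / (1 - Δ) - 1 with hεdef
  have hεeq : ε = Δ / (1 - Δ) := by rw [hεdef]; field_simp; ring
  have hε0 : 0 ≤ ε := by rw [hεeq]; positivity
  have hε1 : ε ≤ 1 := by rw [hεeq, div_le_iff₀ hp]; linarith
  have hεΔ : Δ ≤ ε := by rw [hεeq, le_div_iff₀ hp]; nlinarith
  have hsplit : y ^ (1 / (1 - Δ)) = y * y ^ ε := by
    have he : 1 / (1 - Δ) = 1 + ε := by rw [hεdef]; ring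
    rw [he, Real.rpow_add hy0, Real.rpow_one]
  have hyb : y ^ ε ≤ b ^ ε := Real.rpow_le_rpow hy0.le hy.2 hε0
  have hbb : b ≤ b ^ ε := by
    have := Real.rpow_le_rpow_of_exponent_ge hb0 hb1.le hε1
    rwa [Real.rpow_one] at this
  have hLb : Real.log (1 / b) = -Real.log b := by rw [one_div, Real.log_inv]
  have hLbnn : 0 ≤ Real.log (1 / b) := by
    rw [hLb]
    have := Real.log_nonpos hb0.le hb1.le
    linarith
  have hexp : 1 + ε * Real.log (1 / b) ≤ b ^ (-ε) := by
    calc 1 + ε * Real.log (1 / b) = Real.log b * (-ε) + 1 := by rw [hLb]; ring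
      _ ≤ Real.exp (Real.log b * (-ε)) := Real.add_one_le_exp _
      _ = b ^ (-ε) := (Real.rpow_def_of_pos hb0 _).symm
  have hbε : 0 < b ^ ε := Real.rpow_pos_of_pos hb0 _
  have hkey : ε * Real.log (1 / b) * b ^ ε ≤ 1 - b ^ ε := by
    have hmul : (1 + ε * Real.log (1 / b)) * b ^ ε ≤ b ^ (-ε) * b ^ ε :=
      mul_le_mul_of_nonneg_right hexp hbε.le
    have hone : b ^ (-ε) * b ^ ε = 1 := by
      rw [← Real.rpow_add hb0]
      norm_num
    nlinarith [hmul]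
  have hbεle1 : b ^ ε ≤ 1 := Real.rpow_le_one hb0.le hb1.le hε0
  have hyεle1 : y ^ ε ≤ 1 := Real.rpow_le_one hy0.le (le_trans hy.2 hb1.le) hε0
  have step1 : a * (1 - b ^ ε) ≤ y * (1 - y ^ ε) :=
    mul_le_mul hy.1 (by linarith) (by linarith) hy0.le
  have s21 : Δ * Real.log (1 / b) * b ≤ ε * Real.log (1 / b) * b :=
    mul_le_mul_of_nonneg_right (mul_le_mul_of_nonneg_right hεΔ hLbnn) hb0.le
  have s22 : ε * Real.log (1 / b) * b ≤ ε * Real.log (1 / b) * b ^ ε :=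
    mul_le_mul_of_nonneg_left hbb (mul_nonneg hε0 hLbnn)
  calc Δ * (a * b * Real.log (1 / b)) = a * (Δ * Real.log (1 / b) * b) := by ring
    _ ≤ a * (1 - b ^ ε) := mul_le_mul_of_nonneg_left (by linarith) ha.le
    _ ≤ y * (1 - y ^ ε) := step1
    _ = y - y ^ (1 / (1 - Δ)) := by rw [hsplit]; ring

end MonotoneScoreGapAux

theorem monotone_score_expectation_gap (h : StieltjesFunction ℝ)
    (hpos : 0 < ∫ y in Set.Ioo (0:ℝ) 1, y * Real.log (1 / y) ∂h.measure) :
    ∃ c₁ c₂ Δ₀ : ℝ, 0 < c₁ ∧ 0 < c₂ ∧ 0 < Δ₀ ∧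
      ∀ (W : Type) [Fintype W] [Nonempty W] (P : W → ℝ),
        (∀ w, 0 < P w) → (∑ w, P w = 1) →
        1 - Finset.univ.sup' Finset.univ_nonempty P ≤ Δ₀ →
        c₁ * (1 - Finset.univ.sup' Finset.univ_nonempty P)
            ≤ (∫ r in Set.Ioo (0:ℝ) 1, h r * (∑ w, r ^ (1 / P w - 1))) -
              (∫ r in Set.Ioo (0:ℝ) 1, h r) ∧
        (∫ r in Set.Ioo (0:ℝ) 1, h r * (∑ w, r ^ (1 / P w - 1))) -
              (∫ r in Set.Ioo (0:ℝ) 1, h r)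
            ≤ c₂ * (1 - Finset.univ.sup' Finset.univ_nonempty P) := by
  classical
  set μ := h.measure with hμdef
  have hfin : μ (Set.Ioo (0:ℝ) 1) < ⊤ := by
    refine lt_of_le_of_lt (measure_mono Set.Ioo_subset_Ioc_self) ?_
    rw [hμdef, h.measure_Ioc]
    exact ENNReal.ofReal_lt_top
  have hne : μ (Set.Ioo (0:ℝ) 1) ≠ 0 := by
    intro h0
    rw [Measure.restrict_eq_zero.2 h0, integral_zero_measure] at hpos
    exact lt_irrefl 0 hpos
  have hcov : Set.Ioo (0:ℝ) 1 ⊆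
      ⋃ n : ℕ, Set.Icc (1 / ((n:ℝ) + 2)) (1 - 1 / ((n:ℝ) + 2)) := by
    intro y hy
    obtain ⟨n, hn⟩ := exists_nat_gt (max (1 / y) (1 / (1 - y)))
    have hy0 := hy.1
    have hy1 : (0:ℝ) < 1 - y := by linarith [hy.2]
    have hn2 : (0:ℝ) < (n:ℝ) + 2 := by positivity
    refine Set.mem_iUnion.2 ⟨n, ?_, ?_⟩
    · have h1 : 1 / y < (n:ℝ) := lt_of_le_of_lt (le_max_left _ _) hn
      rw [div_lt_iff₀ hy0] at h1
      rw [div_le_iff₀ hn2]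
      nlinarith
    · have h1 : 1 / (1 - y) < (n:ℝ) := lt_of_le_of_lt (le_max_right _ _) hn
      rw [div_lt_iff₀ hy1] at h1
      have h2 : 1 / ((n:ℝ) + 2) ≤ 1 - y := by
        rw [div_le_iff₀ hn2]
        nlinarith
      linarith
  obtain ⟨n, hn⟩ : ∃ n : ℕ, μ (Set.Icc (1 / ((n:ℝ) + 2)) (1 - 1 / ((n:ℝ) + 2))) ≠ 0 := by
    by_contra hc
    push_neg at hc
    exact hne (measure_mono_null hcov (measure_iUnion_null hc))
  set a : ℝ := 1 / ((n:ℝ) + 2) with hadef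
  set b : ℝ := 1 - 1 / ((n:ℝ) + 2) with hbdef
  have hn2 : (0:ℝ) < (n:ℝ) + 2 := by positivity
  have ha : 0 < a := by rw [hadef]; positivity
  have hnn : (0:ℝ) ≤ (n:ℝ) := Nat.cast_nonneg n
  have ha2 : a ≤ 1/2 := by
    rw [hadef, div_le_div_iff₀ hn2 two_pos]
    linarith
  have hb1 : b < 1 := by
    rw [hbdef]
    have : (0:ℝ) < 1 / ((n:ℝ) + 2) := by positivity
    linarith
  have hab : a ≤ b := by
    rw [hbdef]
    rw [hadef] at ha2 ⊢
    linarith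
  have hb0 : 0 < b := lt_of_lt_of_le ha hab
  have hIccsub : Set.Icc a b ⊆ Set.Ioo (0:ℝ) 1 := fun y hy =>
    ⟨lt_of_lt_of_le ha hy.1, lt_of_le_of_lt hy.2 hb1⟩
  have hIccfin : μ (Set.Icc a b) ≠ ⊤ :=
    ne_of_lt (lt_of_le_of_lt (measure_mono hIccsub) hfin)
  set m : ℝ := (μ (Set.Icc a b)).toReal with hmdef
  have hm : 0 < m := ENNReal.toReal_pos hn hIccfin
  set I : ℝ := ∫ y in Set.Ioo (0:ℝ) 1, y * Real.log (1 / y) ∂μ with hIdef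
  have hLb : 0 < Real.log (1 / b) := Real.log_pos (one_lt_one_div hb0 hb1)
  have h01 : h 0 ≤ h 1 := h.mono zero_le_one
  refine ⟨(1/2) * (a * b * Real.log (1 / b)) * m, 2 * I + (h 1 - h 0), 1/2,
    by nlinarith [mul_pos (mul_pos (mul_pos ha hb0) hLb) hm], by linarith, by norm_num, ?_⟩
  intro W _ _ P hP hsum hΔle
  obtain ⟨w₀, -, hw₀⟩ := Finset.exists_mem_eq_sup' (Finset.univ_nonempty) P
  set p : ℝ := Finset.univ.sup' Finset.univ_nonempty P with hpdef
  have hppos : 0 < p := hw₀ ▸ hP w₀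
  have hple1 : p ≤ 1 := by
    rw [hw₀, ← hsum]
    exact Finset.single_le_sum (fun i _ => (hP i).le) (Finset.mem_univ w₀)
  set Δ : ℝ := 1 - p with hΔdef
  have hΔ0 : 0 ≤ Δ := by rw [hΔdef]; linarith
  have hΔhalf : Δ ≤ 1/2 := hΔle
  have hphalf : 1/2 ≤ p := by
    rw [hΔdef] at hΔhalf
    linarith
  have hpw : ∀ w, 0 < P w ∧ P w ≤ 1 := fun w =>
    ⟨hP w, le_trans (Finset.le_sup' P (Finset.mem_univ w)) hple1⟩
  set Φ : ℝ → ℝ := fun q => ∫ s in Set.Ioo (0:ℝ) 1, (h (s ^ q) - h s) with hΦdef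
  have hΦsplit : ∀ q : ℝ, 0 < q →
      Φ q = (∫ s in Set.Ioo (0:ℝ) 1, h (s ^ q)) - ∫ s in Set.Ioo (0:ℝ) 1, h s :=
    fun q hq => integral_sub (MonotoneScoreGapAux.integrableOn_h_rpow h hq.le)
      (MonotoneScoreGapAux.integrableOn_h h)
  have hΦnonneg : ∀ q : ℝ, 0 < q → q ≤ 1 → 0 ≤ Φ q := by
    intro q hq0 hq1
    refine setIntegral_nonneg measurableSet_Ioo (fun s hs => ?_)
    refine sub_nonneg.2 (h.mono ?_)
    have := Real.rpow_le_rpow_of_exponent_ge hs.1 hs.2.le hq1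
    rwa [Real.rpow_one] at this
  have hΦle : ∀ q : ℝ, 0 < q → Φ q ≤ h 1 - h 0 := by
    intro q hq0
    have hmono : ∀ s ∈ Set.Ioo (0:ℝ) 1, h (s ^ q) - h s ≤ h 1 - h 0 := by
      intro s hs
      have h1 : h (s ^ q) ≤ h 1 := h.mono (Real.rpow_le_one hs.1.le hs.2.le hq0.le)
      have h2 : h 0 ≤ h s := h.mono hs.1.le
      linarith
    have hint : IntegrableOn (fun s : ℝ => h (s ^ q) - h s) (Set.Ioo (0:ℝ) 1) :=
      (MonotoneScoreGapAux.integrableOn_h_rpow h hq0.le).sub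
        (MonotoneScoreGapAux.integrableOn_h h)
    calc Φ q ≤ ∫ _ in Set.Ioo (0:ℝ) 1, (h 1 - h 0) :=
          setIntegral_mono_on hint
            (integrableOn_const (by rw [Real.volume_Ioo]; exact ENNReal.ofReal_ne_top))
            measurableSet_Ioo hmono
      _ = h 1 - h 0 := by
          rw [setIntegral_const, measureReal_def, Real.volume_Ioo]
          norm_num
  have hgap : (∫ r in Set.Ioo (0:ℝ) 1, h r * (∑ w, r ^ (1 / P w - 1))) -
      (∫ r in Set.Ioo (0:ℝ) 1, h r) = ∑ w, P w * Φ (P w) := by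
    have e1 : (∫ r in Set.Ioo (0:ℝ) 1, h r * (∑ w, r ^ (1 / P w - 1)))
        = ∑ w, ∫ r in Set.Ioo (0:ℝ) 1, h r * r ^ (1 / P w - 1) := by
      calc (∫ r in Set.Ioo (0:ℝ) 1, h r * (∑ w, r ^ (1 / P w - 1)))
          = ∫ r in Set.Ioo (0:ℝ) 1, ∑ w, h r * r ^ (1 / P w - 1) :=
            setIntegral_congr_fun measurableSet_Ioo (fun r _ => Finset.mul_sum _ _ _)
        _ = ∑ w, ∫ r in Set.Ioo (0:ℝ) 1, h r * r ^ (1 / P w - 1) := by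
            refine integral_finset_sum _ (fun w _ => ?_)
            refine MonotoneScoreGapAux.integrableOn_h_mul_rpow h ?_
            have h1 := (hpw w).1
            have h2 := (hpw w).2
            have h3 : 1 ≤ 1 / P w := one_le_one_div h1 h2
            linarith
    have e3 : (∫ r in Set.Ioo (0:ℝ) 1, h r) = ∑ w, P w * ∫ s in Set.Ioo (0:ℝ) 1, h s := by
      rw [← Finset.sum_mul, hsum, one_mul]
    rw [e1, e3, ← Finset.sum_sub_distrib]
    refine Finset.sum_congr rfl (fun w _ => ?_)
    rw [MonotoneScoreGapAux.subst h (hpw w).1 (hpw w).2, ← mul_sub,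
      ← hΦsplit (P w) (hpw w).1]
  have hpΔ : p = 1 - Δ := by rw [hΔdef]; ring
  have hphi : Φ p = ∫ y in Set.Ioo (0:ℝ) 1, (y - y ^ (1 / p)) ∂μ :=
    MonotoneScoreGapAux.phi_eq h hppos hple1
  have hint1 : IntegrableOn (fun y : ℝ => y - y ^ (1 / p)) (Set.Ioo (0:ℝ) 1) μ := by
    refine MonotoneScoreGapAux.integrableOn_of_bound' μ hfin.ne _
      (measurable_id.sub (Real.continuous_rpow_const (by positivity)).measurable) 1
      (fun y hy => ?_)
    have hle : y ^ (1 / p) ≤ y := by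
      have := Real.rpow_le_rpow_of_exponent_ge hy.1 hy.2.le (one_le_one_div hppos hple1)
      rwa [Real.rpow_one] at this
    have hge : 0 ≤ y ^ (1 / p) := Real.rpow_nonneg hy.1.le _
    rw [abs_of_nonneg (by linarith)]
    linarith [hy.2]
  have hint2 : IntegrableOn (fun y : ℝ => y * Real.log (1 / y)) (Set.Ioo (0:ℝ) 1) μ := by
    refine MonotoneScoreGapAux.integrableOn_of_bound' μ hfin.ne _
      (measurable_id.mul (Real.measurable_log.comp (measurable_const.div measurable_id))) 1
      (fun y hy => ?_)
    have hy0 := hy.1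
    have hlognn : 0 ≤ Real.log (1 / y) := by
      rw [one_div, Real.log_inv]
      have := Real.log_nonpos hy0.le hy.2.le
      linarith
    have hlogle : Real.log (1 / y) ≤ 1 / y - 1 :=
      Real.log_le_sub_one_of_pos (by positivity)
    rw [abs_of_nonneg (mul_nonneg hy0.le hlognn)]
    have h1 : y * Real.log (1 / y) ≤ y * (1 / y - 1) :=
      mul_le_mul_of_nonneg_left hlogle hy0.le
    have h2 : y * (1 / y - 1) = 1 - y := by field_simp
    nlinarith [hy.2]
  have hupper : Φ p ≤ 2 * Δ * I := by
    rw [hphi, hIdef]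
    calc ∫ y in Set.Ioo (0:ℝ) 1, (y - y ^ (1 / p)) ∂μ
        ≤ ∫ y in Set.Ioo (0:ℝ) 1, 2 * Δ * (y * Real.log (1 / y)) ∂μ := by
          refine setIntegral_mono_on hint1 (hint2.const_mul _) measurableSet_Ioo
            (fun y hy => ?_)
          have := MonotoneScoreGapAux.pt_upper hy hΔ0 hΔhalf
          rwa [← hpΔ] at this
      _ = 2 * Δ * ∫ y in Set.Ioo (0:ℝ) 1, y * Real.log (1 / y) ∂μ :=
          integral_const_mul _ _
  have hlower : Δ * (a * b * Real.log (1 / b)) * m ≤ Φ p := by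
    rw [hphi]
    have hnn2 : 0 ≤ᵐ[μ.restrict (Set.Ioo (0:ℝ) 1)] fun y : ℝ => y - y ^ (1 / p) := by
      refine (ae_restrict_iff' measurableSet_Ioo).2 (ae_of_all _ fun y hy => ?_)
      have := Real.rpow_le_rpow_of_exponent_ge hy.1 hy.2.le (one_le_one_div hppos hple1)
      rw [Real.rpow_one] at this
      exact sub_nonneg.2 this
    have hstep : Δ * (a * b * Real.log (1 / b)) * m
        ≤ ∫ y in Set.Icc a b, (y - y ^ (1 / p)) ∂μ := by
      have h' := setIntegral_ge_of_const_le (μ := μ) (c := Δ * (a * b * Real.log (1 / b)))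
        measurableSet_Icc hIccfin
        (fun y hy => by
          have := MonotoneScoreGapAux.pt_lower ha hb1 hab hy hΔ0 hΔhalf
          rwa [← hpΔ] at this)
        (hint1.mono_set hIccsub)
      rw [hmdef, ← measureReal_def, mul_comm _ (μ.real (Set.Icc a b)), ← smul_eq_mul]
      exact h'
    refine le_trans hstep ?_
    exact setIntegral_mono_set hint1 hnn2 (HasSubset.Subset.eventuallyLE hIccsub)
  have hsum_erase : ∑ w ∈ Finset.univ.erase w₀, P w = Δ := by
    have hh := Finset.add_sum_erase Finset.univ P (Finset.mem_univ w₀)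
    rw [hsum] at hh
    rw [hΔdef, hw₀]
    linarith
  have hgap_decomp : ∑ w, P w * Φ (P w)
      = P w₀ * Φ (P w₀) + ∑ w ∈ Finset.univ.erase w₀, P w * Φ (P w) :=
    (Finset.add_sum_erase _ _ (Finset.mem_univ w₀)).symm
  constructor
  · rw [hgap, hgap_decomp]
    have h1 : 0 ≤ ∑ w ∈ Finset.univ.erase w₀, P w * Φ (P w) :=
      Finset.sum_nonneg fun w _ => mul_nonneg (hP w).le (hΦnonneg _ (hpw w).1 (hpw w).2)
    have h2 : (1/2) * Φ p ≤ P w₀ * Φ (P w₀) := by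
      rw [← hw₀]
      exact mul_le_mul_of_nonneg_right hphalf (hΦnonneg p hppos hple1)
    have heq : (1/2) * (a * b * Real.log (1 / b)) * m * Δ
        = (1/2) * (Δ * (a * b * Real.log (1 / b)) * m) := by ring
    linarith [hlower]
  · rw [hgap, hgap_decomp]
    have h1 : ∑ w ∈ Finset.univ.erase w₀, P w * Φ (P w) ≤ Δ * (h 1 - h 0) := by
      calc ∑ w ∈ Finset.univ.erase w₀, P w * Φ (P w)
          ≤ ∑ w ∈ Finset.univ.erase w₀, P w * (h 1 - h 0) :=
            Finset.sum_le_sum fun w _ =>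
              mul_le_mul_of_nonneg_left (hΦle _ (hP w)) (hP w).le
        _ = Δ * (h 1 - h 0) := by rw [← Finset.sum_mul, hsum_erase]
    have h2 : P w₀ * Φ (P w₀) ≤ 2 * Δ * I := by
      rw [← hw₀]
      calc p * Φ p ≤ 1 * Φ p :=
            mul_le_mul_of_nonneg_right hple1 (hΦnonneg p hppos hple1)
        _ = Φ p := one_mul _
        _ ≤ 2 * Δ * I := hupper
    have heq : (2 * I + (h 1 - h 0)) * Δ = 2 * Δ * I + Δ * (h 1 - h 0) := by ring
    linarith
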